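/- A substring of a given string is a maximal repeat if and only if it is both maximal to the right and maximal to the left. -/

import Mathlib

def occs {α : Type*} [DecidableEq α] (w u : List α) : Finset ℕ :=
  (Finset.range (w.length + 1)).filter (fun i => u <+: w.drop i)

def countOcc {α : Type*} [DecidableEq α] (w u : List α) : ℕ := (occs w u).card
def MaximalRepeat {α : Type*} [DecidableEq α] (w u : List α) : Prop :=
  u <:+: w ∧ 2 ≤ countOcc w u ∧
    ∀ v : List α, u <:+: v → v ≠ u → countOcc w v < countOcc w u

lemma countOcc_prepend_le {α : Type*} [DecidableEq α] (w a s : List α) :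
    countOcc w (a ++ s) ≤ countOcc w s := by
  classical
  apply Finset.card_le_card_of_injOn (fun i => i + a.length)
  · intro i hi
    simp only [occs, Finset.mem_coe, Finset.mem_filter, Finset.mem_range] at hi ⊢
    obtain ⟨hi1, t, ht⟩ := hi
    have hlen : (a ++ s ++ t).length = (w.drop i).length := by rw [ht]
    simp only [List.length_append, List.length_drop] at hlen
    constructor
    · omega
    · refine ⟨t, ?_⟩
      have : w.drop (i + a.length) = (w.drop i).drop a.length := by
        rw [List.drop_drop]
      rw [this, ← ht]
      simp
  · intro i _ j _ h
    simpa using h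

lemma countOcc_le_of_prefix {α : Type*} [DecidableEq α] (w s t : List α)
    (h : s <+: t) : countOcc w t ≤ countOcc w s := by
  apply Finset.card_le_card
  intro i hi
  simp only [occs, Finset.mem_filter, Finset.mem_range] at hi ⊢
  exact ⟨hi.1, h.trans hi.2⟩

/-- A substring occurring at least twice is a maximal repeat iff it is maximal to the
right and maximal to the left. -/
theorem stmt1 {α : Type*} [DecidableEq α] (w u : List α)
    (hu : u <:+: w) (h2 : 2 ≤ countOcc w u) :
    MaximalRepeat w u ↔
      ((∀ c : α, countOcc w (u ++ [c]) < countOcc w u) ∧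
       (∀ c : α, countOcc w (c :: u) < countOcc w u)) := by
  constructor
  · rintro ⟨-, -, h⟩
    constructor
    · intro c
      apply h
      · exact ⟨[], [c], rfl⟩
      · intro he
        have := congrArg List.length he
        simp at this
    · intro c
      apply h
      · exact ⟨[c], [], by simp⟩
      · intro he
        have := congrArg List.length he
        simp at this
  · rintro ⟨hr, hl⟩
    refine ⟨hu, h2, ?_⟩
    rintro v ⟨a, b, rfl⟩ hne
    cases b with
    | cons c b' =>
        calc countOcc w (a ++ u ++ (c :: b'))
            ≤ countOcc w (u ++ (c :: b')) := by
              rw [List.append_assoc]; exact countOcc_prepend_le w a _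
          _ ≤ countOcc w (u ++ [c]) :=
              countOcc_le_of_prefix w _ _ ⟨b', by simp⟩
          _ < countOcc w u := hr c
    | nil =>
        rcases a.eq_nil_or_concat with rfl | ⟨a', c, rfl⟩
        · simp at hne
        · calc countOcc w (a'.concat c ++ u ++ [])
              = countOcc w (a' ++ (c :: u)) := by simp
            _ ≤ countOcc w (c :: u) := countOcc_prepend_le w a' _
            _ < countOcc w u := hl c
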